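/- Let α ≥ 1 be real. The function h : (0,∞) → ℝ defined by h(ξ) = log(e^{αξ} − 1) − log(e^{ξ} − 1) is convex on (0,∞). -/

import Mathlib

open Real Set

/-- For `1 ≤ a` and `0 ≤ u`, `a * sinh u ≤ sinh (a * u)`. -/
lemma sinh_mul_le (a u : ℝ) (ha : 1 ≤ a) (hu : 0 ≤ u) :
    a * Real.sinh u ≤ Real.sinh (a * u) := by
  have hmono : MonotoneOn (fun t : ℝ => Real.sinh (a * t) - a * Real.sinh t) (Ici 0) := by
    apply monotoneOn_of_deriv_nonneg (convex_Ici 0)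
    · exact (Real.continuous_sinh.comp (continuous_const.mul continuous_id)).sub
        (continuous_const.mul Real.continuous_sinh) |>.continuousOn
    · intro t ht
      exact (((Real.hasDerivAt_sinh (a * t)).comp t
        ((hasDerivAt_id t).const_mul a)).sub
        ((Real.hasDerivAt_sinh t).const_mul a)).differentiableAt.differentiableWithinAt
    · intro t ht
      rw [interior_Ici, mem_Ioi] at ht
      have hd : HasDerivAt (fun t : ℝ => Real.sinh (a * t) - a * Real.sinh t)
          (Real.cosh (a * t) * (a * 1) - a * Real.cosh t) t :=
        ((Real.hasDerivAt_sinh (a * t)).comp t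
          ((hasDerivAt_id t).const_mul a)).sub ((Real.hasDerivAt_sinh t).const_mul a)
      rw [hd.deriv]
      have hc : Real.cosh t ≤ Real.cosh (a * t) := by
        rw [Real.cosh_le_cosh]
        rw [abs_of_pos ht, abs_of_pos (by positivity)]
        nlinarith
      nlinarith [ht.le]
  have := hmono self_mem_Ici (mem_Ici.2 hu) hu
  simpa using this

/-- Key inequality for the second derivative. -/
lemma key_ineq (α x : ℝ) (hα : 1 ≤ α) (hx : 0 < x) :
    α ^ 2 * Real.exp (α * x) / (Real.exp (α * x) - 1) ^ 2 ≤
      Real.exp x / (Real.exp x - 1) ^ 2 := by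
  have hx2 : 0 < x / 2 := by linarith
  have hs : 0 < Real.sinh (x / 2) := Real.sinh_pos_iff.2 hx2
  have hS : 0 < Real.sinh (α * (x / 2)) := Real.sinh_pos_iff.2 (by positivity)
  have hkey := sinh_mul_le α (x / 2) hα hx2.le
  -- rewrite e^t - 1 = e^(t/2) * (2 sinh (t/2))
  have fact : ∀ t : ℝ, Real.exp t - 1 = Real.exp (t / 2) * (2 * Real.sinh (t / 2)) := by
    intro t
    rw [Real.sinh_eq]
    have : Real.exp (t/2) * Real.exp (t/2) = Real.exp t := by
      rw [← Real.exp_add]; ring_nf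
    have h2 : Real.exp (t/2) * Real.exp (-(t/2)) = 1 := by
      rw [← Real.exp_add]; simp
    nlinarith [this, h2]
  have hS' : 0 < Real.sinh (α * x / 2) := by
    have h : α * x / 2 = α * (x / 2) := by ring
    rw [h]; exact hS
  have hex : Real.exp (x/2) ^ 2 = Real.exp x := by
    rw [sq, ← Real.exp_add]; norm_num
  have hex2 : Real.exp (α * x/2) ^ 2 = Real.exp (α * x) := by
    rw [sq, ← Real.exp_add]; ring_nf
  have e1 : Real.exp x / (Real.exp x - 1) ^ 2 = 1 / (4 * Real.sinh (x/2) ^ 2) := by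
    rw [fact x, mul_pow, hex, div_eq_div_iff (by positivity) (by positivity)]
    ring
  have e2 : α ^ 2 * Real.exp (α * x) / (Real.exp (α * x) - 1) ^ 2
      = α ^ 2 / (4 * Real.sinh (α * x / 2) ^ 2) := by
    rw [fact (α * x), mul_pow, hex2, div_eq_div_iff (by positivity) (by positivity)]
    ring
  rw [e1, e2]
  rw [div_le_div_iff₀ (by positivity) (by positivity)]
  have h : α * x / 2 = α * (x / 2) := by ring
  rw [h]
  nlinarith [hkey, hs, mul_le_mul hkey hkey (by positivity) hS.le]

/-- For real `α ≥ 1`, the function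
`h(ξ) = log(e^{αξ} − 1) − log(e^{ξ} − 1)` is convex on `(0, ∞)`. -/
theorem log_ratio_convex (α : ℝ) (hα : 1 ≤ α) :
    ConvexOn ℝ (Set.Ioi (0 : ℝ))
      (fun ξ => Real.log (Real.exp (α * ξ) - 1) - Real.log (Real.exp ξ - 1)) := by
  have hαpos : 0 < α := lt_of_lt_of_le one_pos hα
  set f : ℝ → ℝ := fun ξ => Real.log (Real.exp (α * ξ) - 1) - Real.log (Real.exp ξ - 1) with hf
  set g : ℝ → ℝ := fun ξ => α * Real.exp (α * ξ) / (Real.exp (α * ξ) - 1)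
      - Real.exp ξ / (Real.exp ξ - 1) with hg
  -- positivity facts
  have hne : ∀ x : ℝ, 0 < x → Real.exp x - 1 ≠ 0 := by
    intro x hx
    have := Real.add_one_lt_exp (ne_of_gt hx)
    linarith
  have hne' : ∀ x : ℝ, 0 < x → Real.exp (α * x) - 1 ≠ 0 := fun x hx =>
    hne (α * x) (by positivity)
  -- first derivative
  have hd1 : ∀ x : ℝ, 0 < x → HasDerivAt f (g x) x := by
    intro x hx
    have h1 : HasDerivAt (fun ξ : ℝ => Real.exp (α * ξ) - 1) (α * Real.exp (α * x)) x := by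
      have := (((hasDerivAt_id x).const_mul α).exp).sub_const 1
      simpa [mul_comm] using this
    have h2 : HasDerivAt (fun ξ : ℝ => Real.exp ξ - 1) (Real.exp x) x :=
      (Real.hasDerivAt_exp x).sub_const 1
    have hl1 := h1.log (hne' x hx)
    have hl2 := h2.log (hne x hx)
    exact hl1.sub hl2
  -- second derivative
  set g' : ℝ → ℝ := fun ξ => Real.exp ξ / (Real.exp ξ - 1) ^ 2
      - α ^ 2 * Real.exp (α * ξ) / (Real.exp (α * ξ) - 1) ^ 2 with hg'
  have hd2 : ∀ x : ℝ, 0 < x → HasDerivAt g (g' x) x := by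
    intro x hx
    have he1 : HasDerivAt (fun ξ : ℝ => Real.exp (α * ξ)) (α * Real.exp (α * x)) x := by
      have := ((hasDerivAt_id x).const_mul α).exp
      simpa [mul_comm] using this
    have hnum1 : HasDerivAt (fun ξ : ℝ => α * Real.exp (α * ξ))
        (α * (α * Real.exp (α * x))) x := he1.const_mul α
    have hden1 : HasDerivAt (fun ξ : ℝ => Real.exp (α * ξ) - 1) (α * Real.exp (α * x)) x :=
      he1.sub_const 1
    have hq1 := hnum1.div hden1 (hne' x hx)
    have hnum2 : HasDerivAt (fun ξ : ℝ => Real.exp ξ) (Real.exp x) x := Real.hasDerivAt_exp x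
    have hden2 : HasDerivAt (fun ξ : ℝ => Real.exp ξ - 1) (Real.exp x) x :=
      hnum2.sub_const 1
    have hq2 := hnum2.div hden2 (hne x hx)
    have hA := hne' x hx
    have hB := hne x hx
    have eq1 : (α * (α * Real.exp (α * x)) * (Real.exp (α * x) - 1)
        - α * Real.exp (α * x) * (α * Real.exp (α * x))) / (Real.exp (α * x) - 1) ^ 2
        = -(α ^ 2 * Real.exp (α * x) / (Real.exp (α * x) - 1) ^ 2) := by
      field_simp; ring
    have eq2 : (Real.exp x * (Real.exp x - 1) - Real.exp x * Real.exp x) / (Real.exp x - 1) ^ 2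
        = -(Real.exp x / (Real.exp x - 1) ^ 2) := by
      field_simp; ring
    have final := hq1.sub hq2
    rw [eq1, eq2] at final
    have heq : g' x = -(α ^ 2 * Real.exp (α * x) / (Real.exp (α * x) - 1) ^ 2)
        - -(Real.exp x / (Real.exp x - 1) ^ 2) := by rw [hg']; ring
    rw [heq]
    exact final
  -- deriv f = g on Ioi 0
  have hderiv_eq : ∀ x ∈ Ioi (0:ℝ), deriv f x = g x := fun x hx => (hd1 x hx).deriv
  have hEv : ∀ x ∈ Ioi (0:ℝ), deriv f =ᶠ[nhds x] g := by
    intro x hx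
    exact Filter.eventuallyEq_of_mem (isOpen_Ioi.mem_nhds hx) hderiv_eq
  apply convexOn_of_deriv2_nonneg (convex_Ioi 0)
  · intro x hx
    exact (hd1 x hx).continuousAt.continuousWithinAt
  · intro x hx
    rw [interior_Ioi] at hx
    exact (hd1 x hx).differentiableAt.differentiableWithinAt
  · intro x hx
    rw [interior_Ioi] at hx
    have : DifferentiableAt ℝ g x := (hd2 x hx).differentiableAt
    exact (this.congr_of_eventuallyEq (hEv x hx)).differentiableWithinAt
  · intro x hx
    rw [interior_Ioi] at hx
    have h2 : deriv (deriv f) x = deriv g x := (hEv x hx).deriv_eq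
    have h3 : deriv g x = g' x := (hd2 x hx).deriv
    have : deriv^[2] f x = g' x := by
      simp only [Function.iterate_succ, Function.iterate_zero, Function.comp_apply, id]
      rw [h2, h3]
    rw [this, hg']
    have := key_ineq α x hα hx
    linarith
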